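/- Suppose Δ : ℝ≥0 → ℝ is continuous and persistently exciting, i.e. there exist T, δ > 0 with ∫_t^{t+T} Δ²(s) ds ≥ δ for all t ≥ 0, and suppose V : ℝ≥0 → ℝ≥0 is differentiable with V̇(t) ≤ -c Δ²(t) V(t) for a constant c > 0. Then V(t) → 0 exponentially: there exist K, λ > 0 such that V(t) ≤ K e^{-λ t} V(0) for all t ≥ 0. -/

import Mathlib

/-- a nonnegative differentiable `V` with `V̇ ≤ -c Δ² V` and `Δ`
persistently exciting converges to zero exponentially. -/
theorem stmt4 (Δ : ℝ → ℝ) (V V' : ℝ → ℝ) (T δ c : ℝ)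
    (hΔ : Continuous Δ) (hT : 0 < T) (hδ : 0 < δ) (hc : 0 < c)
    (hPE : ∀ t, 0 ≤ t → δ ≤ ∫ s in t..(t + T), (Δ s) ^ 2)
    (hVnn : ∀ t, 0 ≤ t → 0 ≤ V t)
    (hV : ∀ t, 0 ≤ t → HasDerivAt V (V' t) t)
    (hV' : ∀ t, 0 ≤ t → V' t ≤ -c * (Δ t) ^ 2 * V t) :
    ∃ K lam : ℝ, 0 < K ∧ 0 < lam ∧
      ∀ t, 0 ≤ t → V t ≤ K * Real.exp (-lam * t) * V 0 := by
  have hΔ2 : Continuous fun s => (Δ s) ^ 2 := by continuity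
  have hInt : ∀ a b : ℝ, IntervalIntegrable (fun s => (Δ s) ^ 2) MeasureTheory.volume a b :=
    fun a b => hΔ2.intervalIntegrable a b
  set I : ℝ → ℝ := fun t => ∫ s in (0:ℝ)..t, (Δ s) ^ 2 with hI
  have hIderiv : ∀ t : ℝ, HasDerivAt I ((Δ t) ^ 2) t := by
    intro t
    exact intervalIntegral.integral_hasDerivAt_right (hInt 0 t)
      (hΔ2.stronglyMeasurableAtFilter _ _) hΔ2.continuousAt
  -- lower bound on I via PE
  have hkey : ∀ n : ℕ, ∀ t : ℝ, (n : ℝ) * T ≤ t → (n : ℝ) * δ ≤ I t := by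
    intro n
    induction n with
    | zero =>
      intro t ht
      simp only [Nat.cast_zero, zero_mul] at ht ⊢
      exact intervalIntegral.integral_nonneg ht (fun u _ => sq_nonneg _)
    | succ n ih =>
      intro t ht
      have hnT : (0:ℝ) ≤ (n : ℝ) * T := by positivity
      have ht' : (n : ℝ) * T + T ≤ t := by
        have : ((n : ℝ) + 1) * T = (n : ℝ) * T + T := by ring
        rw [Nat.cast_succ] at ht; linarith [this ▸ ht]
      have hsplit : I t = (∫ s in (0:ℝ)..((n:ℝ)*T), (Δ s) ^ 2)
          + (∫ s in ((n:ℝ)*T)..((n:ℝ)*T + T), (Δ s) ^ 2)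
          + (∫ s in ((n:ℝ)*T + T)..t, (Δ s) ^ 2) := by
        rw [intervalIntegral.integral_add_adjacent_intervals (hInt 0 _) (hInt _ _),
          intervalIntegral.integral_add_adjacent_intervals (hInt 0 _) (hInt _ _)]
      have h1 : (n : ℝ) * δ ≤ ∫ s in (0:ℝ)..((n:ℝ)*T), (Δ s) ^ 2 := ih _ le_rfl
      have h2 : δ ≤ ∫ s in ((n:ℝ)*T)..((n:ℝ)*T + T), (Δ s) ^ 2 := hPE _ hnT
      have h3 : (0:ℝ) ≤ ∫ s in ((n:ℝ)*T + T)..t, (Δ s) ^ 2 :=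
        intervalIntegral.integral_nonneg ht' (fun u _ => sq_nonneg _)
      rw [hsplit]; push_cast; linarith
  have hIlow : ∀ t : ℝ, 0 ≤ t → δ / T * t - δ ≤ I t := by
    intro t ht
    set n := ⌊t / T⌋₊ with hn
    have hnt : (n : ℝ) * T ≤ t := by
      have := Nat.floor_le (a := t / T) (by positivity)
      calc (n : ℝ) * T ≤ t / T * T := by nlinarith
        _ = t := by field_simp
    have hlt : t / T < (n : ℝ) + 1 := Nat.lt_floor_add_one _
    have := hkey n t hnt
    have hnd : δ / T * t - δ ≤ (n : ℝ) * δ := by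
      have h1 : t / T ≤ (n : ℝ) + 1 := hlt.le
      have h2 : δ / T * t = δ * (t / T) := by ring
      nlinarith
    linarith
  -- the auxiliary function g = V * exp (c * I)
  set g : ℝ → ℝ := fun t => V t * Real.exp (c * I t) with hg
  have hgderiv : ∀ t : ℝ, 0 ≤ t →
      HasDerivAt g (V' t * Real.exp (c * I t)
        + V t * (Real.exp (c * I t) * (c * (Δ t) ^ 2))) t := by
    intro t ht
    have h1 : HasDerivAt (fun u => c * I u) (c * (Δ t) ^ 2) t :=
      (hIderiv t).const_mul c
    have h2 : HasDerivAt (fun u => Real.exp (c * I u))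
        (Real.exp (c * I t) * (c * (Δ t) ^ 2)) t := by
      exact (Real.hasDerivAt_exp (c * I t)).comp t h1
    exact (hV t ht).mul h2
  have hganti : AntitoneOn g (Set.Ici (0:ℝ)) := by
    apply antitoneOn_of_deriv_nonpos (convex_Ici 0)
    · intro t ht
      exact ((hgderiv t ht).continuousAt).continuousWithinAt
    · intro t ht
      rw [interior_Ici] at ht
      exact ((hgderiv t ht.le).differentiableAt).differentiableWithinAt
    · intro t ht
      rw [interior_Ici] at ht
      rw [(hgderiv t ht.le).deriv]
      have hVt := hVnn t ht.le
      have hV't := hV' t ht.le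
      have hexp : 0 < Real.exp (c * I t) := Real.exp_pos _
      nlinarith [sq_nonneg (Δ t), mul_nonneg hVt hexp.le]
  have hgbound : ∀ t : ℝ, 0 ≤ t → V t ≤ Real.exp (-(c * I t)) * V 0 := by
    intro t ht
    have h0 : g t ≤ g 0 := hganti (Set.self_mem_Ici) ht ht
    have hI0 : I 0 = 0 := by simp [hI]
    have hg0 : g 0 = V 0 := by simp [hg, hI0]
    have hexp : 0 < Real.exp (c * I t) := Real.exp_pos _
    have : V t * Real.exp (c * I t) ≤ V 0 := by
      rw [← hg0]; exact h0
    calc V t = V t * Real.exp (c * I t) * Real.exp (-(c * I t)) := by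
          rw [mul_assoc, ← Real.exp_add]; simp
      _ ≤ V 0 * Real.exp (-(c * I t)) := by
          exact mul_le_mul_of_nonneg_right this (Real.exp_pos _).le
      _ = Real.exp (-(c * I t)) * V 0 := by ring
  refine ⟨Real.exp (c * δ), c * δ / T, Real.exp_pos _, by positivity, ?_⟩
  intro t ht
  have hb := hgbound t ht
  have hIl := hIlow t ht
  have hmono : Real.exp (-(c * I t)) ≤ Real.exp (c * δ) * Real.exp (-(c * δ / T) * t) := by
    rw [← Real.exp_add]
    apply Real.exp_le_exp.2
    have : c * (δ / T * t - δ) ≤ c * I t := by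
      exact mul_le_mul_of_nonneg_left hIl hc.le
    have heq : c * (δ / T * t - δ) = c * δ / T * t - c * δ := by ring
    linarith
  calc V t ≤ Real.exp (-(c * I t)) * V 0 := hb
    _ ≤ Real.exp (c * δ) * Real.exp (-(c * δ / T) * t) * V 0 :=
        mul_le_mul_of_nonneg_right hmono (hVnn 0 le_rfl)
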